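/- For every angle v of any triangle with vertices 0, 1, z where z lies in the closed hyperbolic disk of radius ln(√2) centered at ω₁ = 1/3 + (√2/3)i (in the Poincaré half-plane metric), the largest angle of the triangle is at most arccos(−5/(2√7)). -/

import Mathlib

open EuclideanGeometry

private lemma arccos_mono {a b : ℝ} (h : a ≤ b) : Real.arccos b ≤ Real.arccos a := by
  unfold Real.arccos
  have := Real.monotone_arcsin h
  linarith

theorem angles_bounded_in_hyperbolic_disk
    (d : ℂ → ℂ → ℝ)
    (hd : ∀ z₁ z₂ : ℂ, 0 < z₁.im → 0 < z₂.im →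
      0 ≤ d z₁ z₂ ∧
      Real.cosh (d z₁ z₂) = 1 + ‖z₁ - z₂‖ ^ 2 / (2 * z₁.im * z₂.im))
    (z : ℂ) (hz : 0 < z.im)
    (hdisk : d z (1/3 + (Real.sqrt 2 / 3) * Complex.I) ≤ Real.log (Real.sqrt 2)) :
    EuclideanGeometry.angle (1 : ℂ) 0 z ≤ Real.arccos (-5 / (2 * Real.sqrt 7)) ∧
    EuclideanGeometry.angle (0 : ℂ) 1 z ≤ Real.arccos (-5 / (2 * Real.sqrt 7)) ∧
    EuclideanGeometry.angle (0 : ℂ) z 1 ≤ Real.arccos (-5 / (2 * Real.sqrt 7)) := by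
  set ω : ℂ := 1/3 + (Real.sqrt 2 / 3) * Complex.I with hω
  set s : ℝ := Real.sqrt 2 with hsdef
  have hs0 : (0:ℝ) < s := Real.sqrt_pos.mpr (by norm_num)
  have hs2 : s ^ 2 = 2 := Real.sq_sqrt (by norm_num)
  have hωim : ω.im = s / 3 := by simp [hω]
  have hωre : ω.re = 1 / 3 := by simp [hω]
  have hωim0 : 0 < ω.im := by rw [hωim]; positivity
  obtain ⟨hd0, hdc⟩ := hd z ω hz hωim0
  set x := z.re with hx
  set y := z.im with hy
  -- cosh bound
  have hcosh : Real.cosh (d z ω) ≤ (s + s⁻¹) / 2 := by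
    rw [← Real.cosh_log hs0]
    rw [Real.cosh_le_cosh]
    rw [abs_of_nonneg hd0, abs_of_nonneg (Real.log_nonneg (by
      rw [hsdef]; nlinarith [Real.sq_sqrt (show (0:ℝ) ≤ 2 by norm_num),
        Real.sqrt_nonneg 2]))]
    exact hdisk
  rw [hdc] at hcosh
  -- the Euclidean disk
  have habs : ‖z - ω‖ ^ 2 = (x - 1/3)^2 + (y - s/3)^2 := by
    rw [Complex.sq_norm, Complex.normSq_apply]
    simp [Complex.sub_re, Complex.sub_im, hωre, hωim]
    ring
  rw [habs, hωim] at hcosh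
  have hA : (x - 1/3)^2 + (y - s/3)^2 ≤ ((s + s⁻¹)/2 - 1) * (2 * y * (s/3)) := by
    have hpos : (0:ℝ) < 2 * y * (s/3) := by positivity
    have h2 : ((x - 1/3)^2 + (y - s/3)^2) / (2 * y * (s/3)) ≤ (s + s⁻¹)/2 - 1 := by
      linarith
    calc (x - 1/3)^2 + (y - s/3)^2
        = ((x - 1/3)^2 + (y - s/3)^2) / (2 * y * (s/3)) * (2 * y * (s/3)) := by
          field_simp
      _ ≤ ((s + s⁻¹)/2 - 1) * (2 * y * (s/3)) := by
          exact mul_le_mul_of_nonneg_right h2 (le_of_lt hpos)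
  have hsinv : s * s⁻¹ = 1 := mul_inv_cancel₀ (ne_of_gt hs0)
  have key : (x - 1/3)^2 + (y - 1/2)^2 ≤ 1/36 := by nlinarith [hA, hs2, hsinv]
  clear hA hcosh hdc habs hd hdisk hd0 hsinv
  have hx1 : 1/6 ≤ x := by nlinarith [key, sq_nonneg (y - 1/2)]
  have hx2 : x ≤ 1/2 := by nlinarith [key, sq_nonneg (y - 1/2)]
  have hy1 : 1/3 ≤ y := by nlinarith [key, sq_nonneg (x - 1/3)]
  clear key hs2 hs0 hωim hωre hωim0 hω hsdef
  have ht0 : (0:ℝ) < Real.sqrt 7 := Real.sqrt_pos.mpr (by norm_num)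
  have ht2 : Real.sqrt 7 ^ 2 = 7 := Real.sq_sqrt (by norm_num)
  have h5pos : (0:ℝ) ≤ 5 / (2 * Real.sqrt 7) := by positivity
  have hneg : (-5 / (2 * Real.sqrt 7) : ℝ) ≤ 0 := by rw [neg_div]; linarith
  have him : 0 < z.im := hz
  have hz0 : z ≠ 0 := by intro h; rw [h] at him; simp at him
  have hz1 : z ≠ 1 := by intro h; rw [h] at him; simp at him
  have hn0 : 0 < ‖z‖ := by simpa using hz0
  have hn2 : ‖z‖ ^ 2 = x^2 + y^2 := by
    rw [Complex.sq_norm, Complex.normSq_apply]; ring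
  have e0 : EuclideanGeometry.angle (1:ℂ) 0 z =
      Real.arccos (x / (1 * ‖z‖)) := by
    rw [EuclideanGeometry.angle, InnerProductGeometry.angle, Complex.inner]
    simp [hx]
  have e1 : EuclideanGeometry.angle (0:ℂ) 1 z =
      Real.arccos ((1 - x) / (1 * ‖z - 1‖)) := by
    rw [EuclideanGeometry.angle, InnerProductGeometry.angle, Complex.inner]
    norm_num [hx]
  have g0 : EuclideanGeometry.angle (1:ℂ) 0 z ≤ Real.arccos (-5 / (2 * Real.sqrt 7)) := by
    rw [e0]
    apply arccos_mono
    have : 0 ≤ x / (1 * ‖z‖) := by positivity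
    linarith
  have g1 : EuclideanGeometry.angle (0:ℂ) 1 z ≤ Real.arccos (-5 / (2 * Real.sqrt 7)) := by
    rw [e1]
    apply arccos_mono
    have : 0 ≤ (1 - x) / (1 * ‖z - 1‖) := by
      apply div_nonneg (by linarith) (by positivity)
    linarith
  refine ⟨g0, g1, ?_⟩
  -- angle at z via angle sum
  have hsum := EuclideanGeometry.angle_add_angle_add_angle_eq_pi (p₁ := (0:ℂ)) (p₂ := z)
    (p₃ := (1:ℂ)) hz0
  have hlow : Real.arccos (5 / (2 * Real.sqrt 7)) ≤ EuclideanGeometry.angle (1:ℂ) 0 z := by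
    rw [e0]
    apply arccos_mono
    have hsq : (2 * Real.sqrt 7 * x)^2 ≤ (5 * ‖z‖)^2 := by
      nlinarith [ht2, hn2, hx2, hy1, hx1, hn0]
    have h1 : 2 * Real.sqrt 7 * x ≤ 5 * ‖z‖ := by
      have h2 := Real.sqrt_le_sqrt hsq
      rwa [Real.sqrt_sq (by positivity), Real.sqrt_sq (by positivity)] at h2
    rw [one_mul, div_le_div_iff₀ hn0 (by positivity)]
    linarith
  have hnn := EuclideanGeometry.angle_nonneg z (1:ℂ) 0
  have harc : Real.arccos (-5 / (2 * Real.sqrt 7)) = Real.pi - Real.arccos (5 / (2 * Real.sqrt 7)) := by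
    rw [neg_div, Real.arccos_neg]
  linarith [hsum, hlow, hnn, harc.ge,
    EuclideanGeometry.angle_nonneg z (1:ℂ) 0]
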